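/- With the notation of the context, the double integral ∬ u(x)u(y)(e^{F(x,y)}−1)n(x,y) dx dy converges absolutely, every integral below is finite, and the quadratic form 𝓔^{μ,F}(u,u) := 𝓔(u,u) − ∬_{ℝ^d×ℝ^d} u(x)u(y)(e^{F(x,y)}−1)n(x,y) dy dx − ∫u²dμ⁺ + ∫u²dμ⁻ satisfies the identity 𝓔^{μ,F}(u,u) = 𝓔(u,u) + ∫_{ℝ^d} u² dρ⁻ − (1/2)∬_{ℝ^d×ℝ^d} (u(x)−u(y))² G⁻(x,y) n(x,y) dx dy + (1/2)∬_{ℝ^d×ℝ^d} (u(x)−u(y))² G⁺(x,y) n(x,y) dx dy − ∫_{ℝ^d} u² dρ⁺. -/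

import Mathlib

noncomputable section

open MeasureTheory Real ENNReal Set
open scoped Classical

/-- The state space `ℝ^d` with the Euclidean norm and Lebesgue measure. -/
abbrev V (d : ℕ) := EuclideanSpace ℝ (Fin d)

/-- `I(r) = ∫₀^∞ s^{(d+α)/2-1} e^{-s/4 - r²/s} ds`. -/
def Ifun (d : ℕ) (α r : ℝ) : ℝ :=
  ∫ s in Set.Ioi (0 : ℝ), s ^ (((d : ℝ) + α) / 2 - 1) * Real.exp (-s / 4 - r ^ 2 / s)

/-- `ψ(r) = I(r)/I(0)`. -/
def psi (d : ℕ) (α r : ℝ) : ℝ := Ifun d α r / Ifun d α 0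

/-- The constant `C(d,-α) = α Γ((d+α)/2) / (2^{1-α} π^{d/2} Γ(1-α/2))`. -/
def Cconst (d : ℕ) (α : ℝ) : ℝ :=
  α * Real.Gamma (((d : ℝ) + α) / 2) /
    (2 ^ (1 - α) * Real.pi ^ ((d : ℝ) / 2) * Real.Gamma (1 - α / 2))

/-- Jump kernel density `n(x,y) = 2C(d,-α) ψ(m^{1/α}|x-y|) |x-y|^{-(d+α)}` for `x ≠ y`,
with `n(x,x) = 0`. -/
def nker (d : ℕ) (α m : ℝ) (x y : V d) : ℝ :=
  if x = y then 0
  else 2 * Cconst d α * psi d α (m ^ (1 / α) * ‖x - y‖) / ‖x - y‖ ^ ((d : ℝ) + α)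

/-- `F⁺ = F ∨ 0`. -/
def Fp (d : ℕ) (F : V d → V d → ℝ) (x y : V d) : ℝ := max (F x y) 0

/-- `F⁻ = -(F ∧ 0)`. -/
def Fm (d : ℕ) (F : V d → V d → ℝ) (x y : V d) : ℝ := -(min (F x y) 0)

/-- `G⁺ = (e^{F⁺} - 1) e^{-F⁻}`. -/
def Gp (d : ℕ) (F : V d → V d → ℝ) (x y : V d) : ℝ :=
  (Real.exp (Fp d F x y) - 1) * Real.exp (-(Fm d F x y))

/-- `G⁻ = 1 - e^{-F⁻}`. -/
def Gm (d : ℕ) (F : V d → V d → ℝ) (x y : V d) : ℝ := 1 - Real.exp (-(Fm d F x y))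

/-- The Dirichlet form `𝓔(u,u) = (1/2)∬ (u(x)-u(y))² n(x,y) dx dy` (in `[0,∞]`). -/
def En (d : ℕ) (α m : ℝ) (u : V d → ℝ) : ℝ≥0∞ :=
  (1 / 2) * ∫⁻ x, ∫⁻ y, ENNReal.ofReal ((u x - u y) ^ 2 * nker d α m x y)

/-- The jump-type energy `∬ (u(x)-u(y))² G(x,y) n(x,y) dx dy` (in `[0,∞]`). -/
def Jform (d : ℕ) (α m : ℝ) (G : V d → V d → ℝ) (u : V d → ℝ) : ℝ≥0∞ :=
  ∫⁻ x, ∫⁻ y, ENNReal.ofReal ((u x - u y) ^ 2 * G x y * nker d α m x y)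

/-- `NG(x) = ∫ G(x,y) n(x,y) dy` (in `[0,∞]`). -/
def NG (d : ℕ) (α m : ℝ) (G : V d → V d → ℝ) (x : V d) : ℝ≥0∞ :=
  ∫⁻ y, ENNReal.ofReal (G x y * nker d α m x y)

/-- `ρ = μ + ξ_G` where `ξ_G(dx) = NG(x) dx`. -/
def rho (d : ℕ) (α m : ℝ) (G : V d → V d → ℝ) (μ : Measure (V d)) : Measure (V d) :=
  μ + volume.withDensity (NG d α m G)

/-- `∫ u² dμ` (in `[0,∞]`). -/
def sqInt (d : ℕ) (u : V d → ℝ) (μ : Measure (V d)) : ℝ≥0∞ :=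
  ∫⁻ x, ENNReal.ofReal ((u x) ^ 2) ∂μ

/-- The cross term `∬ u(x)u(y)(e^{F(x,y)}-1) n(x,y) dy dx` (Lebesgue–Bochner integral on the
product space). -/
def crossInt (d : ℕ) (α m : ℝ) (F : V d → V d → ℝ) (u : V d → ℝ) : ℝ :=
  ∫ p : V d × V d, u p.1 * u p.2 * (Real.exp (F p.1 p.2) - 1) * nker d α m p.1 p.2

/-- The quadratic form
`𝓔^{μ,F}(u,u) = 𝓔(u,u) - ∬ u(x)u(y)(e^{F(x,y)}-1)n(x,y) dy dx - ∫ u² dμ⁺ + ∫ u² dμ⁻`. -/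
def EmuF (d : ℕ) (α m : ℝ) (F : V d → V d → ℝ) (μp μm : Measure (V d)) (u : V d → ℝ) : ℝ :=
  (En d α m u).toReal - crossInt d α m F u - (sqInt d u μp).toReal + (sqInt d u μm).toReal

/-- The killed form
`𝓔⁻(u,u) = (1/2)∬ (u(x)-u(y))² e^{-F⁻(x,y)} n(x,y) dx dy + ∫ u² dρ⁻` (in `[0,∞]`). -/
def EnMinus (d : ℕ) (α m : ℝ) (F : V d → V d → ℝ) (μm : Measure (V d)) (u : V d → ℝ) : ℝ≥0∞ :=
  (1 / 2) * (∫⁻ x, ∫⁻ y, ENNReal.ofReal ((u x - u y) ^ 2 * Real.exp (-(Fm d F x y)) * nker d α m x y))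
    + sqInt d u (rho d α m (Gm d F) μm)

section AuxLemmas

lemma Ifun_nonneg (d : ℕ) (α r : ℝ) : 0 ≤ Ifun d α r := by
  apply MeasureTheory.setIntegral_nonneg measurableSet_Ioi
  intro s hs
  exact mul_nonneg (Real.rpow_nonneg (le_of_lt hs) _) (Real.exp_nonneg _)

lemma psi_nonneg (d : ℕ) (α r : ℝ) : 0 ≤ psi d α r :=
  div_nonneg (Ifun_nonneg d α r) (Ifun_nonneg d α 0)

lemma Cconst_nonneg (d : ℕ) {α : ℝ} (hα0 : 0 < α) (hα2 : α < 2) : 0 ≤ Cconst d α := by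
  apply div_nonneg
  · exact mul_nonneg hα0.le (Real.Gamma_nonneg_of_nonneg (by positivity))
  · have h1 : (0:ℝ) < Real.Gamma (1 - α / 2) := Real.Gamma_pos_of_pos (by linarith)
    positivity

lemma nker_nonneg (d : ℕ) {α : ℝ} (m : ℝ) (hα0 : 0 < α) (hα2 : α < 2) (x y : V d) :
    0 ≤ nker d α m x y := by
  unfold nker
  split
  · exact le_refl _
  · apply div_nonneg
    · have := Cconst_nonneg d hα0 hα2
      have := psi_nonneg d α (m ^ (1/α) * ‖x - y‖)
      positivity
    · exact Real.rpow_nonneg (norm_nonneg _) _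

lemma nker_symm (d : ℕ) (α m : ℝ) (x y : V d) : nker d α m x y = nker d α m y x := by
  unfold nker
  rw [norm_sub_rev]
  by_cases h : x = y
  · simp [h]
  · simp [h, Ne.symm h]

lemma measurable_Ifun (d : ℕ) (α : ℝ) : Measurable (Ifun d α) := by
  have hf : StronglyMeasurable fun p : ℝ × ℝ =>
      p.2 ^ (((d : ℝ) + α) / 2 - 1) * Real.exp (-p.2 / 4 - p.1 ^ 2 / p.2) := by
    apply Measurable.stronglyMeasurable
    fun_prop
  exact (hf.integral_prod_right' (ν := volume.restrict (Set.Ioi 0))).measurable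

lemma measurable_nker (d : ℕ) (α m : ℝ) : Measurable (Function.uncurry (nker d α m)) := by
  have hnorm : Measurable fun p : V d × V d => ‖p.1 - p.2‖ :=
    (measurable_fst.sub measurable_snd).norm
  have hpsi : Measurable (psi d α) :=
    (measurable_Ifun d α).div measurable_const
  have h2 : Measurable fun p : V d × V d =>
      2 * Cconst d α * psi d α (m ^ (1/α) * ‖p.1 - p.2‖) / ‖p.1 - p.2‖ ^ ((d : ℝ) + α) := by
    apply Measurable.div
    · exact measurable_const.mul (hpsi.comp (measurable_const.mul hnorm))
    · exact hnorm.pow measurable_const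
  unfold Function.uncurry nker
  exact Measurable.ite (measurableSet_eq_fun measurable_fst measurable_snd) measurable_const h2

end AuxLemmas
section KeyLemmas

lemma integrable_of_nonneg' {X : Type*} [MeasurableSpace X] {μ : Measure X} {f : X → ℝ}
    (hm : Measurable f) (h0 : ∀ x, 0 ≤ f x)
    (hfin : ∫⁻ x, ENNReal.ofReal (f x) ∂μ ≠ ⊤) : Integrable f μ :=
  ⟨hm.aestronglyMeasurable,
    (hasFiniteIntegral_iff_ofReal (Filter.Eventually.of_forall h0)).2 hfin.lt_top⟩

lemma measurable_NG (d : ℕ) (α m : ℝ) {G : V d → V d → ℝ}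
    (hG : Measurable (Function.uncurry G)) : Measurable (NG d α m G) := by
  apply Measurable.lintegral_prod_right (f := fun x y => ENNReal.ofReal (G x y * nker d α m x y))
  exact ENNReal.measurable_ofReal.comp (hG.mul (measurable_nker d α m))

lemma key_lemma (d : ℕ) {α : ℝ} (m : ℝ) (hα0 : 0 < α) (hα2 : α < 2)
    (G : V d → V d → ℝ) (hG : Measurable (Function.uncurry G))
    (hGnn : ∀ x y, 0 ≤ G x y) (hGsym : ∀ x y, G x y = G y x)
    (c : ℝ) (hGb : ∀ x y, G x y ≤ c)
    (u : V d → ℝ) (hu : Measurable u)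
    (hE : En d α m u ≠ ⊤)
    (hNG : ∫⁻ x, ENNReal.ofReal ((u x) ^ 2) * NG d α m G x ≠ ⊤) :
    Integrable (fun p : V d × V d => u p.1 * u p.2 * G p.1 p.2 * nker d α m p.1 p.2) ∧
    Jform d α m G u ≠ ⊤ ∧
    ∫ p : V d × V d, u p.1 * u p.2 * G p.1 p.2 * nker d α m p.1 p.2
      = (∫⁻ x, ENNReal.ofReal ((u x) ^ 2) * NG d α m G x).toReal
        - (1/2) * (Jform d α m G u).toReal := by
  have hc : 0 ≤ c := le_trans (hGnn 0 0) (hGb 0 0)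
  have hnm : Measurable (Function.uncurry (nker d α m)) := measurable_nker d α m
  have hn : ∀ x y, 0 ≤ nker d α m x y := fun x y => nker_nonneg d m hα0 hα2 x y
  have hG' : Measurable fun p : V d × V d => G p.1 p.2 := hG
  have hn' : Measurable fun p : V d × V d => nker d α m p.1 p.2 := hnm
  have hu1 : Measurable fun p : V d × V d => u p.1 := hu.comp measurable_fst
  have hu2 : Measurable fun p : V d × V d => u p.2 := hu.comp measurable_snd
  -- the full Dirichlet lintegral is finite
  have hL : ∫⁻ x, ∫⁻ y, ENNReal.ofReal ((u x - u y) ^ 2 * nker d α m x y) ≠ ⊤ := by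
    intro h
    apply hE
    unfold En
    rw [h, ENNReal.mul_top (by norm_num)]
  -- Jform is finite
  have hJ : Jform d α m G u ≠ ⊤ := by
    have hle : Jform d α m G u ≤ ENNReal.ofReal c *
        ∫⁻ x, ∫⁻ y, ENNReal.ofReal ((u x - u y) ^ 2 * nker d α m x y) := by
      unfold Jform
      rw [← lintegral_const_mul' _ _ ENNReal.ofReal_ne_top]
      refine lintegral_mono fun x => ?_
      dsimp only
      rw [← lintegral_const_mul' _ _ ENNReal.ofReal_ne_top]
      refine lintegral_mono fun y => ?_
      rw [← ENNReal.ofReal_mul hc]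
      apply ENNReal.ofReal_le_ofReal
      have h1 : G x y * nker d α m x y ≤ c * nker d α m x y :=
        mul_le_mul_of_nonneg_right (hGb x y) (hn x y)
      nlinarith [sq_nonneg (u x - u y), mul_le_mul_of_nonneg_left h1 (sq_nonneg (u x - u y))]
    exact ne_top_of_le_ne_top (ENNReal.mul_ne_top ENNReal.ofReal_ne_top hL) hle
  -- measurability of the three pieces
  have hm1 : Measurable fun p : V d × V d => u p.1 ^ 2 * G p.1 p.2 * nker d α m p.1 p.2 :=
    ((hu1.pow_const 2).mul hG').mul hn'
  have hm2 : Measurable fun p : V d × V d => u p.2 ^ 2 * G p.1 p.2 * nker d α m p.1 p.2 :=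
    ((hu2.pow_const 2).mul hG').mul hn'
  have hm3 : Measurable fun p : V d × V d => (u p.1 - u p.2) ^ 2 * G p.1 p.2 * nker d α m p.1 p.2 :=
    (((hu1.sub hu2).pow_const 2).mul hG').mul hn'
  -- lintegral of piece 1
  have key1 : ∫⁻ p : V d × V d, ENNReal.ofReal (u p.1 ^ 2 * G p.1 p.2 * nker d α m p.1 p.2)
      = ∫⁻ x, ENNReal.ofReal ((u x) ^ 2) * NG d α m G x := by
    rw [MeasureTheory.Measure.volume_eq_prod,
      lintegral_prod _ hm1.ennreal_ofReal.aemeasurable]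
    apply lintegral_congr; intro x
    have : ∀ y, ENNReal.ofReal (u x ^ 2 * G x y * nker d α m x y)
        = ENNReal.ofReal (u x ^ 2) * ENNReal.ofReal (G x y * nker d α m x y) := by
      intro y; rw [mul_assoc, ENNReal.ofReal_mul (sq_nonneg (u x))]
    simp_rw [this]
    rw [lintegral_const_mul (f := fun y => ENNReal.ofReal (G x y * nker d α m x y)) _ ((hG.of_uncurry_left.mul hnm.of_uncurry_left).ennreal_ofReal)]
    rfl
  -- lintegral of piece 2 via swap
  have hswapeq : ∀ p : V d × V d, u p.2 ^ 2 * G p.1 p.2 * nker d α m p.1 p.2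
      = (fun q : V d × V d => u q.1 ^ 2 * G q.1 q.2 * nker d α m q.1 q.2) (Prod.swap p) := by
    intro p
    simp only [Prod.fst_swap, Prod.snd_swap]
    rw [hGsym p.2 p.1, nker_symm d α m p.2 p.1]
  have key2 : ∫⁻ p : V d × V d, ENNReal.ofReal (u p.2 ^ 2 * G p.1 p.2 * nker d α m p.1 p.2)
      = ∫⁻ x, ENNReal.ofReal ((u x) ^ 2) * NG d α m G x := by
    rw [← key1]
    simp_rw [hswapeq]
    rw [MeasureTheory.Measure.volume_eq_prod]
    exact (MeasureTheory.Measure.measurePreserving_swap).lintegral_comp hm1.ennreal_ofReal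
  -- lintegral of piece 3
  have key3 : ∫⁻ p : V d × V d, ENNReal.ofReal ((u p.1 - u p.2) ^ 2 * G p.1 p.2 * nker d α m p.1 p.2)
      = Jform d α m G u := by
    rw [MeasureTheory.Measure.volume_eq_prod,
      lintegral_prod _ hm3.ennreal_ofReal.aemeasurable]
    rfl
  -- integrability of the three pieces
  have hnn1 : ∀ p : V d × V d, 0 ≤ u p.1 ^ 2 * G p.1 p.2 * nker d α m p.1 p.2 := fun p =>
    mul_nonneg (mul_nonneg (sq_nonneg _) (hGnn _ _)) (hn _ _)
  have hnn2 : ∀ p : V d × V d, 0 ≤ u p.2 ^ 2 * G p.1 p.2 * nker d α m p.1 p.2 := fun p =>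
    mul_nonneg (mul_nonneg (sq_nonneg _) (hGnn _ _)) (hn _ _)
  have hnn3 : ∀ p : V d × V d, 0 ≤ (u p.1 - u p.2) ^ 2 * G p.1 p.2 * nker d α m p.1 p.2 := fun p =>
    mul_nonneg (mul_nonneg (sq_nonneg _) (hGnn _ _)) (hn _ _)
  have hi1 : Integrable fun p : V d × V d => u p.1 ^ 2 * G p.1 p.2 * nker d α m p.1 p.2 :=
    integrable_of_nonneg' hm1 hnn1 (key1 ▸ hNG)
  have hi2 : Integrable fun p : V d × V d => u p.2 ^ 2 * G p.1 p.2 * nker d α m p.1 p.2 :=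
    integrable_of_nonneg' hm2 hnn2 (key2 ▸ hNG)
  have hi3 : Integrable fun p : V d × V d => (u p.1 - u p.2) ^ 2 * G p.1 p.2 * nker d α m p.1 p.2 :=
    integrable_of_nonneg' hm3 hnn3 (key3 ▸ hJ)
  -- integral values of the three pieces
  have hI1 : ∫ p : V d × V d, u p.1 ^ 2 * G p.1 p.2 * nker d α m p.1 p.2
      = (∫⁻ x, ENNReal.ofReal ((u x) ^ 2) * NG d α m G x).toReal := by
    rw [integral_eq_lintegral_of_nonneg_ae (Filter.Eventually.of_forall hnn1)
      hm1.aestronglyMeasurable, key1]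
  have hI2 : ∫ p : V d × V d, u p.2 ^ 2 * G p.1 p.2 * nker d α m p.1 p.2
      = (∫⁻ x, ENNReal.ofReal ((u x) ^ 2) * NG d α m G x).toReal := by
    rw [integral_eq_lintegral_of_nonneg_ae (Filter.Eventually.of_forall hnn2)
      hm2.aestronglyMeasurable, key2]
  have hI3 : ∫ p : V d × V d, (u p.1 - u p.2) ^ 2 * G p.1 p.2 * nker d α m p.1 p.2
      = (Jform d α m G u).toReal := by
    rw [integral_eq_lintegral_of_nonneg_ae (Filter.Eventually.of_forall hnn3)
      hm3.aestronglyMeasurable, key3]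
  -- decomposition
  have hdec : (fun p : V d × V d => u p.1 * u p.2 * G p.1 p.2 * nker d α m p.1 p.2)
      = fun p : V d × V d => (1/2) * (u p.1 ^ 2 * G p.1 p.2 * nker d α m p.1 p.2)
        + (1/2) * (u p.2 ^ 2 * G p.1 p.2 * nker d α m p.1 p.2)
        - (1/2) * ((u p.1 - u p.2) ^ 2 * G p.1 p.2 * nker d α m p.1 p.2) := by
    funext p; ring
  have hint : Integrable
      (fun p : V d × V d => u p.1 * u p.2 * G p.1 p.2 * nker d α m p.1 p.2) := by
    rw [hdec]
    exact ((hi1.const_mul _).add (hi2.const_mul _)).sub (hi3.const_mul _)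
  refine ⟨hint, hJ, ?_⟩
  have hfg : Integrable (fun p : V d × V d =>
      (1/2) * (u p.1 ^ 2 * G p.1 p.2 * nker d α m p.1 p.2)
        + (1/2) * (u p.2 ^ 2 * G p.1 p.2 * nker d α m p.1 p.2)) :=
    (hi1.const_mul _).add (hi2.const_mul _)
  rw [hdec, integral_sub hfg (hi3.const_mul _),
    integral_add (hi1.const_mul (1/2 : ℝ)) (hi2.const_mul (1/2 : ℝ)),
    integral_const_mul, integral_const_mul, integral_const_mul, hI1, hI2, hI3]
  ring

end KeyLemmas
/-- The cross term converges absolutely, every integral below is finite, and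
`𝓔^{μ,F}(u,u) = 𝓔(u,u) + ∫ u² dρ⁻ - (1/2)∬ (u(x)-u(y))² G⁻ n dx dy
  + (1/2)∬ (u(x)-u(y))² G⁺ n dx dy - ∫ u² dρ⁺`. -/
theorem schrodinger_form_identity
    (d : ℕ) (hd : 1 ≤ d) (α m : ℝ) (hα0 : 0 < α) (hα2 : α < 2) (hm : 0 ≤ m)
    (F : V d → V d → ℝ) (hFmeas : Measurable (Function.uncurry F))
    (hFbound : ∃ M : ℝ, ∀ x y, |F x y| ≤ M)
    (hFsymm : ∀ x y, F x y = F y x) (hFdiag : ∀ x, F x x = 0)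
    (μp μm : Measure (V d))
    (u : V d → ℝ) (hu : Measurable u)
    (hE : En d α m u ≠ ⊤)
    (hμp : sqInt d u μp ≠ ⊤) (hμm : sqInt d u μm ≠ ⊤)
    (hNGp : ∫⁻ x, ENNReal.ofReal ((u x) ^ 2) * NG d α m (Gp d F) x ≠ ⊤)
    (hNGm : ∫⁻ x, ENNReal.ofReal ((u x) ^ 2) * NG d α m (Gm d F) x ≠ ⊤) :
    Integrable
      (fun p : V d × V d => u p.1 * u p.2 * (Real.exp (F p.1 p.2) - 1) * nker d α m p.1 p.2) ∧
    Jform d α m (Gm d F) u ≠ ⊤ ∧ Jform d α m (Gp d F) u ≠ ⊤ ∧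
    sqInt d u (rho d α m (Gm d F) μm) ≠ ⊤ ∧ sqInt d u (rho d α m (Gp d F) μp) ≠ ⊤ ∧
    EmuF d α m F μp μm u
      = (En d α m u).toReal + (sqInt d u (rho d α m (Gm d F) μm)).toReal
        - (1 / 2) * (Jform d α m (Gm d F) u).toReal
        + (1 / 2) * (Jform d α m (Gp d F) u).toReal
        - (sqInt d u (rho d α m (Gp d F) μp)).toReal := by
  obtain ⟨M, hM⟩ := hFbound
  have hM0 : 0 ≤ M := le_trans (abs_nonneg _) (hM 0 0)
  -- basic properties of Fp, Fm, Gp, Gm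
  have hFp_nn : ∀ x y, 0 ≤ Fp d F x y := fun x y => le_max_right _ _
  have hFm_nn : ∀ x y, 0 ≤ Fm d F x y := fun x y => by
    simp only [Fm, neg_nonneg]; exact min_le_right _ _
  have hGp_nn : ∀ x y, 0 ≤ Gp d F x y := fun x y =>
    mul_nonneg (sub_nonneg.2 (Real.one_le_exp (hFp_nn x y))) (Real.exp_nonneg _)
  have hGm_nn : ∀ x y, 0 ≤ Gm d F x y := fun x y =>
    sub_nonneg.2 (Real.exp_le_one_iff.2 (neg_nonpos.2 (hFm_nn x y)))
  have hGm_b : ∀ x y, Gm d F x y ≤ 1 := fun x y => by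
    have := Real.exp_nonneg (-(Fm d F x y)); simp only [Gm]; linarith
  have hGp_b : ∀ x y, Gp d F x y ≤ Real.exp M := fun x y => by
    have h1 : Real.exp (-(Fm d F x y)) ≤ 1 :=
      Real.exp_le_one_iff.2 (neg_nonpos.2 (hFm_nn x y))
    have h2 : Real.exp (Fp d F x y) ≤ Real.exp M := by
      apply Real.exp_le_exp.2
      apply max_le (le_trans (le_abs_self _) (hM x y)) hM0
    have h3 : 0 ≤ Real.exp (Fp d F x y) - 1 := sub_nonneg.2 (Real.one_le_exp (hFp_nn x y))
    calc Gp d F x y ≤ Real.exp (Fp d F x y) - 1 := mul_le_of_le_one_right h3 h1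
      _ ≤ Real.exp M := by linarith
  have hGp_sym : ∀ x y, Gp d F x y = Gp d F y x := fun x y => by
    simp only [Gp, Fp, Fm, hFsymm x y]
  have hGm_sym : ∀ x y, Gm d F x y = Gm d F y x := fun x y => by
    simp only [Gm, Fm, hFsymm x y]
  have hFpm : Measurable (Function.uncurry (Fp d F)) := hFmeas.max measurable_const
  have hFmm : Measurable (Function.uncurry (Fm d F)) := (hFmeas.min measurable_const).neg
  have hGpm : Measurable (Function.uncurry (Gp d F)) :=
    (hFpm.exp.sub measurable_const).mul hFmm.neg.exp
  have hGmm : Measurable (Function.uncurry (Gm d F)) :=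
    measurable_const.sub hFmm.neg.exp
  -- splitting e^F - 1 = G⁺ - G⁻
  have hsplit : ∀ x y, Real.exp (F x y) - 1 = Gp d F x y - Gm d F x y := by
    intro x y
    have hF : F x y = Fp d F x y - Fm d F x y := by
      simp only [Fp, Fm, sub_neg_eq_add, max_add_min, add_zero]
    have he : (0:ℝ) < Real.exp (Fm d F x y) := Real.exp_pos _
    rw [hF, Gp, Gm, Real.exp_sub, Real.exp_neg]
    field_simp
    ring
  -- apply the key lemma to G⁺ and G⁻
  have hkeyp := key_lemma d m hα0 hα2 (Gp d F) hGpm hGp_nn hGp_sym (Real.exp M) hGp_b u hu hE hNGp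
  have hkeym := key_lemma d m hα0 hα2 (Gm d F) hGmm hGm_nn hGm_sym 1 hGm_b u hu hE hNGm
  -- the cross-term function splits
  have hcross_fun : (fun p : V d × V d =>
        u p.1 * u p.2 * (Real.exp (F p.1 p.2) - 1) * nker d α m p.1 p.2)
      = fun p : V d × V d => u p.1 * u p.2 * Gp d F p.1 p.2 * nker d α m p.1 p.2
          - u p.1 * u p.2 * Gm d F p.1 p.2 * nker d α m p.1 p.2 := by
    funext p; rw [hsplit p.1 p.2]; ring
  have hint : Integrable (fun p : V d × V d =>
      u p.1 * u p.2 * (Real.exp (F p.1 p.2) - 1) * nker d α m p.1 p.2) := by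
    rw [hcross_fun]; exact hkeyp.1.sub hkeym.1
  -- the value of the cross term
  have hcv : crossInt d α m F u
      = ((∫⁻ x, ENNReal.ofReal ((u x) ^ 2) * NG d α m (Gp d F) x).toReal
          - (1/2) * (Jform d α m (Gp d F) u).toReal)
        - ((∫⁻ x, ENNReal.ofReal ((u x) ^ 2) * NG d α m (Gm d F) x).toReal
          - (1/2) * (Jform d α m (Gm d F) u).toReal) := by
    unfold crossInt
    rw [hcross_fun, integral_sub hkeyp.1 hkeym.1, hkeyp.2.2, hkeym.2.2]
  -- splitting of sqInt over rho
  have hrho : ∀ (G : V d → V d → ℝ), Measurable (Function.uncurry G) → ∀ μ : Measure (V d),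
      sqInt d u (rho d α m G μ)
        = sqInt d u μ + ∫⁻ x, ENNReal.ofReal ((u x) ^ 2) * NG d α m G x := by
    intro G hG μ
    unfold sqInt rho
    rw [lintegral_add_measure, lintegral_withDensity_eq_lintegral_mul _
      (measurable_NG d α m hG) (hu.pow_const 2).ennreal_ofReal]
    congr 1
    exact lintegral_congr fun x => mul_comm _ _
  have hρm : sqInt d u (rho d α m (Gm d F) μm) ≠ ⊤ := by
    rw [hrho (Gm d F) hGmm μm]; exact ENNReal.add_ne_top.2 ⟨hμm, hNGm⟩
  have hρp : sqInt d u (rho d α m (Gp d F) μp) ≠ ⊤ := by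
    rw [hrho (Gp d F) hGpm μp]; exact ENNReal.add_ne_top.2 ⟨hμp, hNGp⟩
  refine ⟨hint, hkeym.2.1, hkeyp.2.1, hρm, hρp, ?_⟩
  unfold EmuF
  rw [hcv, hrho (Gm d F) hGmm μm, hrho (Gp d F) hGpm μp,
    ENNReal.toReal_add hμm hNGm, ENNReal.toReal_add hμp hNGp]
  ring
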